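/- For every u ∈ ℂ^g, the family indexed by integer vectors n ∈ ℤ^g given by n ↦ exp(πi·nᵀBn + 2πi·nᵀu) is summable (the defining series of the Riemann theta function θ(u) converges absolutely); the symmetry of B and positive definiteness of the imaginary part of B ensure this for every u ∈ ℂ^g. -/

import Mathlib

open Matrix Complex Real

lemma summable_pi_int (g : ℕ) {f : ℤ → ℝ} (hf : Summable f) (h0 : ∀ m, 0 ≤ f m) :
    Summable (fun n : Fin g → ℤ => ∏ i, f (n i)) := by
  induction g with
  | zero => exact summable_of_finite_support (Set.toFinite _)
  | succ k ih =>
    refine ((Fin.consEquiv (fun _ : Fin (k+1) => ℤ)).summable_iff).mp ?_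
    have H := hf.mul_of_nonneg ih h0 (fun n => Finset.prod_nonneg fun i _ => h0 _)
    convert H using 1
    funext p
    simp [Fin.consEquiv, Fin.prod_univ_succ]

lemma posdef_lower (g : ℕ) (hg : 1 ≤ g) (A : Matrix (Fin g) (Fin g) ℝ) (hA : A.PosDef) :
    ∃ c > 0, ∀ x : Fin g → ℝ, c * (∑ i, x i ^ 2) ≤ dotProduct x (A.mulVec x) := by
  haveI : Nonempty (Fin g) := ⟨⟨0, hg⟩⟩
  have hcont : Continuous fun x : EuclideanSpace ℝ (Fin g) =>
      dotProduct (x : Fin g → ℝ) (A.mulVec x) := by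
    have h1 : Continuous fun x : Fin g → ℝ => dotProduct x (A.mulVec x) := by
      have : Continuous fun x : Fin g → ℝ => ∑ i, x i * ∑ j, A i j * x j := by fun_prop
      simpa [dotProduct, Matrix.mulVec] using this
    exact h1.comp (EuclideanSpace.equiv (Fin g) ℝ).continuous
  have hne : (Metric.sphere (0 : EuclideanSpace ℝ (Fin g)) 1).Nonempty :=
    NormedSpace.sphere_nonempty.mpr zero_le_one
  obtain ⟨x0, hx0, hmin⟩ := (isCompact_sphere (0 : EuclideanSpace ℝ (Fin g)) 1).exists_isMinOn
    hne hcont.continuousOn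
  have hx0n : (x0 : Fin g → ℝ) ≠ 0 := by
    intro h
    have h1 : ‖x0‖ = 1 := mem_sphere_zero_iff_norm.mp hx0
    rw [show x0 = 0 from (WithLp.ofLp_eq_zero 2).mp h] at h1; simp at h1
  refine ⟨dotProduct (x0 : Fin g → ℝ) (A.mulVec x0), by simpa using hA.dotProduct_mulVec_pos hx0n, ?_⟩
  intro x
  by_cases hx : x = 0
  · simp [hx]
  · set xE : EuclideanSpace ℝ (Fin g) := WithLp.toLp 2 x with hxE
    have hr : 0 < ‖xE‖ := by
      rw [norm_pos_iff]; exact (WithLp.toLp_eq_zero 2).ne.mpr hx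
    set y : EuclideanSpace ℝ (Fin g) := ‖xE‖⁻¹ • xE with hy
    have hysph : y ∈ Metric.sphere (0 : EuclideanSpace ℝ (Fin g)) 1 := by
      simp [hy, norm_smul, _root_.abs_of_nonneg (inv_nonneg.mpr hr.le), inv_mul_cancel₀ hr.ne']
    have hkey : dotProduct (x0 : Fin g → ℝ) (A.mulVec x0) ≤ dotProduct (y : Fin g → ℝ) (A.mulVec y) := hmin hysph
    have hscale : dotProduct (y : Fin g → ℝ) (A.mulVec y)
        = ‖xE‖⁻¹ * (‖xE‖⁻¹ * dotProduct x (A.mulVec x)) := by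
      show dotProduct (‖xE‖⁻¹ • x) (A.mulVec (‖xE‖⁻¹ • x)) = _
      rw [Matrix.mulVec_smul, smul_dotProduct, dotProduct_smul]
      simp [smul_smul, mul_assoc]
    have hnorm : ∑ i, x i ^ 2 = ‖xE‖ ^ 2 := by
      rw [EuclideanSpace.norm_eq, Real.sq_sqrt (by positivity)]
      simp [hxE, Real.norm_eq_abs, _root_.sq_abs]
    rw [hnorm]
    rw [hscale] at hkey
    have h2 : dotProduct (x0 : Fin g → ℝ) (A.mulVec x0) * ‖xE‖ ^ 2
        ≤ ‖xE‖⁻¹ * (‖xE‖⁻¹ * dotProduct x (A.mulVec x)) * ‖xE‖ ^ 2 :=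
      mul_le_mul_of_nonneg_right hkey (by positivity)
    calc dotProduct (x0 : Fin g → ℝ) (A.mulVec x0) * ‖xE‖ ^ 2
        ≤ ‖xE‖⁻¹ * (‖xE‖⁻¹ * dotProduct x (A.mulVec x)) * ‖xE‖ ^ 2 := h2
      _ = (‖xE‖⁻¹ * ‖xE‖) * ((‖xE‖⁻¹ * ‖xE‖) * dotProduct x (A.mulVec x)) := by ring
      _ = dotProduct x (A.mulVec x) := by rw [inv_mul_cancel₀ hr.ne']; ring
    

/-- The term of the Riemann theta series associated with the `g×g` matrix `B`,
evaluated at `u ∈ ℂ^g` and indexed by the integer vector `n ∈ ℤ^g`: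
`exp(πi·nᵀBn + 2πi·nᵀu)`. -/
noncomputable def riemannThetaTerm {g : ℕ} (B : Matrix (Fin g) (Fin g) ℂ)
    (u : Fin g → ℂ) (n : Fin g → ℤ) : ℂ :=
  Complex.exp ((Real.pi : ℂ) * Complex.I *
      (dotProduct (fun i => (n i : ℂ)) (B.mulVec fun i => (n i : ℂ))) +
    2 * (Real.pi : ℂ) * Complex.I * dotProduct (fun i => (n i : ℂ)) u)

/-- For `B` symmetric with positive definite imaginary part, the series defining the
Riemann theta function converges absolutely at every `u ∈ ℂ^g`. -/
theorem riemannTheta_summable (g : ℕ) (hg : 1 ≤ g) (B : Matrix (Fin g) (Fin g) ℂ)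
    (hsym : B.IsSymm) (hpos : (B.map Complex.im).PosDef) (u : Fin g → ℂ) :
    Summable (fun n : Fin g → ℤ => riemannThetaTerm B u n) := by
  obtain ⟨c, hc, hlow⟩ := posdef_lower g hg (B.map Complex.im) hpos
  have hπ := Real.pi_pos
  set C : ℝ := ∑ i, |(u i).im| with hCdef
  have hC0 : 0 ≤ C := Finset.sum_nonneg fun i _ => abs_nonneg _
  set t : ℝ := (2 * Real.pi * C + 1) / (Real.pi * c) with htdef
  have ht0 : 0 ≤ t := div_nonneg (by nlinarith) (by positivity)
  have ht : Real.pi * c * t = 2 * Real.pi * C + 1 := by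
    rw [htdef, mul_div_cancel₀ _ (by positivity : Real.pi * c ≠ 0)]
  set K : ℝ := Real.pi * c * g * t ^ 2 with hKdef
  -- the majorant
  have hgeo : Summable (fun m : ℕ => Real.exp (-|(m : ℝ)|)) := by
    have h1 : Summable (fun m : ℕ => Real.exp (-1) ^ m) :=
      summable_geometric_of_lt_one (Real.exp_nonneg _) (by
        rw [Real.exp_lt_one_iff]; norm_num)
    refine h1.congr fun m => ?_
    rw [← Real.exp_nat_mul, _root_.abs_of_nonneg (by positivity : (0:ℝ) ≤ (m:ℝ))]
    ring_nf
  have hfZ : Summable (fun m : ℤ => Real.exp (-|(m : ℝ)|)) := by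
    apply Summable.of_nat_of_neg
    · refine hgeo.congr fun m => ?_; push_cast; ring_nf
    · refine hgeo.congr fun m => ?_; push_cast; rw [abs_neg]
  have hmaj : Summable (fun n : Fin g → ℤ =>
      Real.exp K * ∏ i, Real.exp (-|((n i : ℤ) : ℝ)|)) :=
    (summable_pi_int g hfZ (fun m => Real.exp_nonneg _)).mul_left _
  apply Summable.of_norm_bounded hmaj
  intro n
  set nr : Fin g → ℝ := fun i => ((n i : ℤ) : ℝ) with hnrdef
  set Q : ℝ := dotProduct nr ((B.map Complex.im).mulVec nr) with hQdef
  set L : ℝ := ∑ i, nr i * (u i).im with hLdef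
  set S : ℝ := ∑ i, |nr i| with hSdef
  have hS0 : 0 ≤ S := Finset.sum_nonneg fun i _ => abs_nonneg _
  -- norm of the term
  have hQim : (dotProduct (fun i => ((n i : ℤ) : ℂ)) (B.mulVec fun i => ((n i : ℤ) : ℂ))).im
      = Q := by
    simp [hQdef, hnrdef, dotProduct, Matrix.mulVec, Finset.mul_sum]
  have hLim : (dotProduct (fun i => ((n i : ℤ) : ℂ)) u).im = L := by
    simp [hLdef, hnrdef, dotProduct]
  have hre : ∀ w v : ℂ, ((Real.pi : ℂ) * Complex.I * w + 2 * (Real.pi : ℂ) * Complex.I * v).re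
      = -Real.pi * w.im - 2 * Real.pi * v.im := by
    intro w v
    simp [Complex.add_re, Complex.mul_re, Complex.mul_im]
    ring
  have hnorm : ‖riemannThetaTerm B u n‖ = Real.exp (-Real.pi * Q - 2 * Real.pi * L) := by
    rw [riemannThetaTerm, Complex.norm_exp, hre, hQim, hLim]
  rw [hnorm, ← Real.exp_sum, ← Real.exp_add]
  apply Real.exp_le_exp.mpr
  -- per-coordinate estimates
  have hQc : c * (∑ i, nr i ^ 2) ≤ Q := hlow nr
  have hsq : t * S - (g : ℝ) * t ^ 2 ≤ ∑ i, nr i ^ 2 := by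
    have h1 : ∀ i : Fin g, t * |nr i| - t ^ 2 ≤ nr i ^ 2 := fun i => by
      nlinarith [sq_nonneg (|nr i| - t), _root_.sq_abs (nr i), abs_nonneg (nr i)]
    calc t * S - (g : ℝ) * t ^ 2 = ∑ i : Fin g, (t * |nr i| - t ^ 2) := by
          rw [Finset.sum_sub_distrib, ← Finset.mul_sum, Finset.sum_const, Finset.card_univ,
            Fintype.card_fin, nsmul_eq_mul]
      _ ≤ ∑ i, nr i ^ 2 := Finset.sum_le_sum fun i _ => h1 i
  have hLlow : -(C * S) ≤ L := by
    have h1 : ∀ i : Fin g, -(C * |nr i|) ≤ nr i * (u i).im := by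
      intro i
      have h2 : |(u i).im| ≤ C :=
        Finset.single_le_sum (f := fun i => |(u i).im|) (fun i _ => abs_nonneg _)
          (Finset.mem_univ i)
      have h3 : |nr i * (u i).im| ≤ |nr i| * C := by
        rw [abs_mul]
        exact mul_le_mul_of_nonneg_left h2 (abs_nonneg _)
      have := neg_abs_le (nr i * (u i).im)
      nlinarith
    calc -(C * S) = ∑ i : Fin g, -(C * |nr i|) := by
          rw [hSdef, Finset.mul_sum, ← Finset.sum_neg_distrib]
      _ ≤ ∑ i, nr i * (u i).im := Finset.sum_le_sum fun i _ => h1 i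
  have e1 : Real.pi * (c * (t * S - (g : ℝ) * t ^ 2)) ≤ Real.pi * Q :=
    mul_le_mul_of_nonneg_left (le_trans (mul_le_mul_of_nonneg_left hsq hc.le) hQc) hπ.le
  have e2 : Real.pi * (2 * -(C * S)) ≤ Real.pi * (2 * L) :=
    mul_le_mul_of_nonneg_left (by linarith) hπ.le
  have e3 : Real.pi * (c * (t * S - (g : ℝ) * t ^ 2)) = (Real.pi * c * t) * S - K := by
    rw [hKdef]; ring
  rw [ht] at e3
  have e4 : (∑ i : Fin g, -|nr i|) = -S := by rw [hSdef, ← Finset.sum_neg_distrib]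
  rw [e4]
  nlinarith [e1, e2, e3]
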